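/- arXiv:1911.06319 — 4 statements merged into one kernel-verified Lean document; each statement's English description precedes it below -/
import Mathlib

section
/- For the thresholded linear environment with weight vectors uniformly distributed on the unit ball in ℝⁿ (n ≥ 2) and σ(y,y') = |y - y'|, the CDM between two nonzero vectors x and x' equals θ/π, where θ ∈ [0,π] is the angle between x and x'. -/
open MeasureTheory Real
open scoped RealInnerProductSpace

lemma arcL1 (a b τ1 τ2 : ℝ) (h0 : 0 < τ1) (h12 : τ1 < τ2) (h2π : τ2 ≤ π)
    (ha : 0 < a) (h : a * Real.cos τ1 + b * Real.sin τ1 ≤ 0) :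
    a * Real.cos τ2 + b * Real.sin τ2 ≤ 0 := by
  have hs1 : 0 < Real.sin τ1 := Real.sin_pos_of_pos_of_lt_pi h0 (lt_of_lt_of_le h12 h2π)
  have hs2 : 0 ≤ Real.sin τ2 := Real.sin_nonneg_of_nonneg_of_le_pi (by linarith) h2π
  have hd : 0 ≤ Real.sin (τ2 - τ1) :=
    Real.sin_nonneg_of_nonneg_of_le_pi (by linarith) (by linarith)
  have hid : Real.sin (τ2 - τ1) = Real.sin τ2 * Real.cos τ1 - Real.cos τ2 * Real.sin τ1 :=
    Real.sin_sub τ2 τ1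
  have key : (a * Real.cos τ2 + b * Real.sin τ2) * Real.sin τ1 ≤ 0 := by nlinarith
  by_contra hc
  push_neg at hc
  nlinarith

lemma arcL2 (a b τ1 τ2 : ℝ) (h0 : 0 < τ1) (h12 : τ1 < τ2) (h2π : τ2 < π)
    (h1 : 0 < a * Real.cos τ1 + b * Real.sin τ1)
    (h2 : a * Real.cos τ2 + b * Real.sin τ2 ≤ 0) : 0 < a := by
  have hs1 : 0 < Real.sin τ1 := Real.sin_pos_of_pos_of_lt_pi h0 (by linarith)
  have hs2 : 0 < Real.sin τ2 := Real.sin_pos_of_pos_of_lt_pi (by linarith) h2π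
  have hd : 0 < Real.sin (τ2 - τ1) :=
    Real.sin_pos_of_pos_of_lt_pi (by linarith) (by linarith)
  have hid : Real.sin (τ2 - τ1) = Real.sin τ2 * Real.cos τ1 - Real.cos τ2 * Real.sin τ1 :=
    Real.sin_sub τ2 τ1
  nlinarith

lemma cauchy_lin (f : ℝ → ℝ) (c : ℝ)
    (hadd : ∀ δ1 δ2, 0 < δ1 → 0 < δ2 → δ1 + δ2 < π → f (δ1 + δ2) = f δ1 + f δ2)
    (hnn : ∀ δ, 0 ≤ f δ)
    (hnorm : ∀ δ, 0 < δ → δ < π → f δ + f (π - δ) = c) :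
    ∀ δ, 0 < δ → δ < π → f δ = δ / π * c := by
  have hπ : (0:ℝ) < π := Real.pi_pos
  have hc : 0 ≤ c := by
    have := hnorm (π/2) (by linarith) (by linarith)
    have := hnn (π/2); have := hnn (π - π/2); linarith
  have hmono : ∀ a b, 0 < a → a ≤ b → b < π → f a ≤ f b := by
    intro a b ha hab hb
    rcases eq_or_lt_of_le hab with rfl | h
    · exact le_refl _
    · have := hadd a (b - a) ha (by linarith) (by linarith)
      rw [add_sub_cancel] at this
      have := hnn (b - a); linarith
  have hle : ∀ δ, 0 < δ → δ < π → f δ ≤ c := by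
    intro δ h1 h2
    have := hnorm δ h1 h2; have := hnn (π - δ); linarith
  have hnat : ∀ j : ℕ, ∀ δ : ℝ, 0 < δ → ((j:ℝ) + 1) * δ < π →
      f (((j:ℝ) + 1) * δ) = ((j:ℝ) + 1) * f δ := by
    intro j
    induction j with
    | zero => intro δ h1 h2; norm_num
    | succ j ih =>
      intro δ h1 h2
      push_cast at h2 ⊢
      have hj : (0:ℝ) ≤ (j:ℝ) := Nat.cast_nonneg j
      have h3 : ((j:ℝ) + 1) * δ < π := by nlinarith
      have h4 := hadd (((j:ℝ)+1) * δ) δ (by nlinarith) h1 (by nlinarith)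
      have hih := ih δ h1 h3
      calc f (((j:ℝ) + 1 + 1) * δ) = f (((j:ℝ)+1) * δ + δ) := by ring_nf
        _ = ((j:ℝ)+1) * f δ + f δ := by rw [h4, hih]
        _ = ((j:ℝ) + 1 + 1) * f δ := by ring
  have hmul : ∀ m : ℕ, 1 ≤ m → ∀ δ : ℝ, 0 < δ → (m:ℝ) * δ < π →
      f ((m:ℝ) * δ) = (m:ℝ) * f δ := by
    intro m hm δ h1 h2
    have : ((m:ℝ)) = ((m-1:ℕ):ℝ) + 1 := by
      push_cast [Nat.cast_sub hm]; ring
    rw [this] at h2 ⊢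
    exact hnat (m-1) δ h1 h2
  have hkval : ∀ k : ℕ, 2 ≤ k → (k:ℝ) * f (π / k) = c := by
    intro k hk
    have hk0 : (0:ℝ) < k := by positivity
    have hk1 : (2:ℝ) ≤ (k:ℝ) := by exact_mod_cast hk
    have hδ : 0 < π / k := by positivity
    have hδπ : π / k < π := by rw [div_lt_iff₀ hk0]; nlinarith
    have hrest : π - π / k = ((k-1:ℕ):ℝ) * (π / k) := by
      push_cast [Nat.cast_sub (by omega : 1 ≤ k)]
      field_simp
    have h2 := hnorm (π / k) hδ hδπ
    have h3 : f (((k-1:ℕ):ℝ) * (π / k)) = ((k-1:ℕ):ℝ) * f (π / k) := by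
      apply hmul (k-1) (by omega) (π / k) hδ
      rw [← hrest]; linarith
    rw [hrest, h3] at h2
    have : ((k-1:ℕ):ℝ) = (k:ℝ) - 1 := by push_cast [Nat.cast_sub (by omega : 1 ≤ k)]; ring
    rw [this] at h2; linarith
  have hmval : ∀ m k : ℕ, 1 ≤ m → m < k → f ((m:ℝ) * (π / k)) = (m:ℝ) / k * c := by
    intro m k hm hmk
    have hk : 2 ≤ k := by omega
    have hk0 : (0:ℝ) < k := by positivity
    have hδ : 0 < π / k := by positivity
    have hmr : ((m:ℝ)) < (k:ℝ) := by exact_mod_cast hmk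
    have hlt : (m:ℝ) * (π / k) < π := by
      calc (m:ℝ) * (π/k) < (k:ℝ) * (π/k) := by exact mul_lt_mul_of_pos_right hmr hδ
        _ = π := by field_simp
    rw [hmul m hm (π / k) hδ hlt]
    have := hkval k hk
    field_simp
    nlinarith [hkval k hk]
  -- final squeeze
  intro δ h1 h2
  rcases eq_or_lt_of_le hc with hc0 | hc0
  · have hA := hle δ h1 h2; have hB := hnn δ
    rw [← hc0]; rw [← hc0] at hA; nlinarith
  by_contra hne
  have habs : 0 < |f δ - δ / π * c| := by
    rcases lt_or_gt_of_ne hne with h | h <;> rw [abs_pos] <;> intro hh <;> nlinarith [hh]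
  obtain ⟨k, hk⟩ := exists_nat_gt (max 2 (c / |f δ - δ / π * c|))
  have hk2 : 2 ≤ k := by
    have := le_max_left 2 (c / |f δ - δ / π * c|)
    have : (2:ℝ) < k := lt_of_le_of_lt this hk
    exact_mod_cast this.le
  have hk0 : (0:ℝ) < k := by positivity
  have hckk : c / (k:ℝ) < |f δ - δ / π * c| := by
    have h5 : c / |f δ - δ / π * c| < k := lt_of_le_of_lt (le_max_right _ _) hk
    rw [div_lt_iff₀ habs] at h5
    rw [div_lt_iff₀ hk0]
    nlinarith
  -- lower bound
  set m : ℕ := ⌊(k:ℝ) * δ / π⌋₊ with hm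
  have hm_le : (m:ℝ) ≤ (k:ℝ) * δ / π := Nat.floor_le (by positivity)
  have hm_gt : (k:ℝ) * δ / π < (m:ℝ) + 1 := Nat.lt_floor_add_one _
  have hmk : m < k := by
    have : (k:ℝ) * δ / π < k := by
      rw [div_lt_iff₀ hπ]; nlinarith
    have : (m:ℝ) < (k:ℝ) := lt_of_le_of_lt hm_le this
    exact_mod_cast this
  have hlow : ((m:ℝ)/k) * c ≤ f δ := by
    rcases Nat.eq_zero_or_pos m with h0 | hpos
    · rw [h0]; simpa using hnn δ
    · have hval := hmval m k hpos hmk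
      have hmπ : (m:ℝ) * (π/k) ≤ δ := by
        have h6 : (m:ℝ) * π ≤ (k:ℝ) * δ := by
          rw [le_div_iff₀ hπ] at hm_le; linarith
        calc (m:ℝ) * (π/k) = (m:ℝ)*π/k := by ring
          _ ≤ (k:ℝ)*δ/k := by gcongr
          _ = δ := by field_simp
      have hmono2 := hmono ((m:ℝ)*(π/k)) δ (by positivity) hmπ h2
      rw [hval] at hmono2; linarith
  have hhigh : f δ ≤ (((m:ℝ)+1)/k) * c := by
    rcases lt_or_ge (m+1) k with hlt | hge
    · have hval := hmval (m+1) k (by omega) hlt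
      have hδm : δ ≤ ((m:ℝ)+1) * (π/k) := by
        rw [div_lt_iff₀ hπ] at hm_gt
        calc δ = (k:ℝ)*δ/k := by field_simp
          _ ≤ ((m:ℝ)+1)*π/k := by gcongr
          _ = ((m:ℝ)+1) * (π/k) := by ring
      have hmlt : ((m:ℝ)+1) * (π/k) < π := by
        have h7 : ((m:ℝ)+1) < k := by exact_mod_cast hlt
        calc ((m:ℝ)+1) * (π/k) < (k:ℝ) * (π/k) := by
              exact mul_lt_mul_of_pos_right h7 (by positivity)
          _ = π := by field_simp
      have h8 := hmono δ (((m:ℝ)+1)*(π/k)) h1 hδm hmlt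
      push_cast at hval
      rw [hval] at h8; linarith
    · have : (1:ℝ) ≤ ((m:ℝ)+1)/k := by
        rw [le_div_iff₀ hk0]
        have : (k:ℝ) ≤ (m:ℝ)+1 := by exact_mod_cast hge
        linarith
      have := hle δ h1 h2
      nlinarith
  have hclose1 : ((m:ℝ)/k) * c ≤ δ/π * c := by
    apply mul_le_mul_of_nonneg_right _ hc
    rw [div_le_div_iff₀ hk0 hπ]
    rw [le_div_iff₀ hπ] at hm_le
    nlinarith
  have hclose2 : δ/π * c ≤ (((m:ℝ)+1)/k) * c := by
    apply mul_le_mul_of_nonneg_right _ hc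
    rw [div_le_div_iff₀ hπ hk0]
    rw [div_lt_iff₀ hπ] at hm_gt
    nlinarith
  have hid : (((m:ℝ)+1)/k) * c - ((m:ℝ)/k) * c = c/k := by field_simp; ring
  have : |f δ - δ/π * c| ≤ c / k := by
    rw [abs_le]
    constructor
    · linarith
    · linarith
  linarith

variable {n : ℕ}

/-- direction at angle `t` in the plane spanned by `u`, `e2`. -/
noncomputable def dirVec (u e2 : EuclideanSpace ℝ (Fin n)) (t : ℝ) : EuclideanSpace ℝ (Fin n) :=
  Real.cos t • u + Real.sin t • e2

/-- rotation by angle ψ in the plane spanned by `u`, `e2`, as a linear map. -/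
noncomputable def rotMap (u e2 : EuclideanSpace ℝ (Fin n)) (ψ : ℝ) :
    EuclideanSpace ℝ (Fin n) →ₗ[ℝ] EuclideanSpace ℝ (Fin n) where
  toFun a := a + ((Real.cos ψ - 1) * ⟪u, a⟫ - Real.sin ψ * ⟪e2, a⟫) • u
      + (Real.sin ψ * ⟪u, a⟫ + (Real.cos ψ - 1) * ⟪e2, a⟫) • e2
  map_add' a b := by
    simp only [inner_add_right]
    module
  map_smul' c a := by
    simp only [inner_smul_right, RingHom.id_apply]
    module

lemma rotMap_apply (u e2 : EuclideanSpace ℝ (Fin n)) (ψ : ℝ) (a : EuclideanSpace ℝ (Fin n)) :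
    rotMap u e2 ψ a = a + ((Real.cos ψ - 1) * ⟪u, a⟫ - Real.sin ψ * ⟪e2, a⟫) • u
      + (Real.sin ψ * ⟪u, a⟫ + (Real.cos ψ - 1) * ⟪e2, a⟫) • e2 := rfl

section ortho
variable {u e2 : EuclideanSpace ℝ (Fin n)} (hu : ‖u‖ = 1) (he : ‖e2‖ = 1) (hue : ⟪u, e2⟫ = 0)
include hu he hue

lemma inner_u_rot (ψ : ℝ) (a : EuclideanSpace ℝ (Fin n)) :
    ⟪u, rotMap u e2 ψ a⟫ = Real.cos ψ * ⟪u, a⟫ - Real.sin ψ * ⟪e2, a⟫ := by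
  have h1 : ⟪u, u⟫ = 1 := by rw [real_inner_self_eq_norm_sq, hu]; norm_num
  have h2 : ⟪u, e2⟫ = 0 := hue
  simp only [rotMap_apply, inner_add_right, real_inner_smul_right, h1, h2]
  ring

lemma inner_e2_rot (ψ : ℝ) (a : EuclideanSpace ℝ (Fin n)) :
    ⟪e2, rotMap u e2 ψ a⟫ = Real.sin ψ * ⟪u, a⟫ + Real.cos ψ * ⟪e2, a⟫ := by
  have h1 : ⟪e2, e2⟫ = 1 := by rw [real_inner_self_eq_norm_sq, he]; norm_num
  have h2 : ⟪e2, u⟫ = 0 := by rw [real_inner_comm]; exact hue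
  simp only [rotMap_apply, inner_add_right, real_inner_smul_right, h1, h2]
  ring

lemma inner_dirVec_rot (ψ t : ℝ) (a : EuclideanSpace ℝ (Fin n)) :
    ⟪dirVec u e2 t, rotMap u e2 ψ a⟫ = ⟪dirVec u e2 (t - ψ), a⟫ := by
  simp only [dirVec, inner_add_left, real_inner_smul_left, inner_u_rot hu he hue,
    inner_e2_rot hu he hue, Real.cos_sub, Real.sin_sub]
  ring

lemma rot_rot (ψ ψ' : ℝ) (a : EuclideanSpace ℝ (Fin n)) :
    rotMap u e2 ψ (rotMap u e2 ψ' a) = rotMap u e2 (ψ + ψ') a := by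
  rw [rotMap_apply u e2 ψ (rotMap u e2 ψ' a), inner_u_rot hu he hue, inner_e2_rot hu he hue,
    rotMap_apply, rotMap_apply, Real.cos_add, Real.sin_add]
  module

lemma rot_zero (a : EuclideanSpace ℝ (Fin n)) : rotMap u e2 0 a = a := by
  simp [rotMap_apply]

lemma rot_norm (ψ : ℝ) (a : EuclideanSpace ℝ (Fin n)) : ‖rotMap u e2 ψ a‖ = ‖a‖ := by
  have h1 : ⟪u, u⟫ = 1 := by rw [real_inner_self_eq_norm_sq, hu]; norm_num
  have h2 : ⟪e2, e2⟫ = 1 := by rw [real_inner_self_eq_norm_sq, he]; norm_num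
  have h3 : ⟪e2, u⟫ = 0 := by rw [real_inner_comm]; exact hue
  have key : ⟪rotMap u e2 ψ a, rotMap u e2 ψ a⟫ = ⟪a, a⟫ := by
    simp only [rotMap_apply, inner_add_left, inner_add_right, real_inner_smul_left,
      real_inner_smul_right, h1, h2, h3, hue, real_inner_comm a u, real_inner_comm a e2]
    linear_combination ((⟪a,u⟫:ℝ)^2 + (⟪a,e2⟫:ℝ)^2) * (Real.sin_sq_add_cos_sq ψ)
  have key2 : ‖rotMap u e2 ψ a‖^2 = ‖a‖^2 := by
    rw [← real_inner_self_eq_norm_sq, ← real_inner_self_eq_norm_sq]; exact key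
  nlinarith [norm_nonneg (rotMap u e2 ψ a), norm_nonneg a]

/-- rotation as a linear isometry equivalence. -/
noncomputable def rotEquiv (ψ : ℝ) :
    EuclideanSpace ℝ (Fin n) ≃ₗᵢ[ℝ] EuclideanSpace ℝ (Fin n) :=
  { (LinearEquiv.ofLinear (rotMap u e2 ψ) (rotMap u e2 (-ψ))
      (by ext a; simp [rot_rot hu he hue, rot_zero hu he hue])
      (by ext a; simp [rot_rot hu he hue, rot_zero hu he hue]) :
        EuclideanSpace ℝ (Fin n) ≃ₗ[ℝ] EuclideanSpace ℝ (Fin n)) with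
    norm_map' := rot_norm hu he hue ψ }

lemma rotEquiv_apply (ψ : ℝ) (a : EuclideanSpace ℝ (Fin n)) :
    rotEquiv hu he hue ψ a = rotMap u e2 ψ a := rfl

end ortho

section measure
variable {n : ℕ}

local notation "E" => EuclideanSpace ℝ (Fin n)
local notation "B" => Metric.closedBall (0 : EuclideanSpace ℝ (Fin n)) 1

/-- wedge set -/
def Sset (u e2 : EuclideanSpace ℝ (Fin n)) (s t : ℝ) : Set (EuclideanSpace ℝ (Fin n)) :=
  {a | 0 < ⟪dirVec u e2 s, a⟫ ∧ ⟪dirVec u e2 t, a⟫ ≤ 0}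

lemma continuous_inner_left (w : EuclideanSpace ℝ (Fin n)) :
    Continuous fun a : EuclideanSpace ℝ (Fin n) => (⟪w, a⟫ : ℝ) :=
  continuous_const.inner continuous_id

lemma measurableSet_posInner (w : EuclideanSpace ℝ (Fin n)) :
    MeasurableSet {a : EuclideanSpace ℝ (Fin n) | 0 < ⟪w, a⟫} :=
  measurableSet_lt measurable_const (continuous_inner_left w).measurable

lemma measurableSet_Sset (u e2 : EuclideanSpace ℝ (Fin n)) (s t : ℝ) :
    MeasurableSet (Sset u e2 s t) := by
  apply MeasurableSet.inter (measurableSet_posInner _)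
  exact measurableSet_le (continuous_inner_left _).measurable measurable_const

lemma hyperplane_null (w : EuclideanSpace ℝ (Fin n)) (hw : w ≠ 0) :
    volume {a : EuclideanSpace ℝ (Fin n) | ⟪w, a⟫ = 0} = 0 := by
  have : {a : EuclideanSpace ℝ (Fin n) | ⟪w, a⟫ = 0}
      = (LinearMap.ker (innerSL ℝ w : EuclideanSpace ℝ (Fin n) →L[ℝ] ℝ).toLinearMap : Set (EuclideanSpace ℝ (Fin n))) := by
    ext a; simp [LinearMap.mem_ker]
  rw [this]
  apply MeasureTheory.Measure.addHaar_submodule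
  intro htop
  have : w ∈ LinearMap.ker (innerSL ℝ w : EuclideanSpace ℝ (Fin n) →L[ℝ] ℝ).toLinearMap := by
    rw [htop]; trivial
  simp only [LinearMap.mem_ker] at this
  have : ⟪w, w⟫ = 0 := this
  exact hw (inner_self_eq_zero.mp this)

end measure

section measure2
variable {n : ℕ}
local notation "B" => Metric.closedBall (0 : EuclideanSpace ℝ (Fin n)) 1

lemma inner_dirVec (u e2 : EuclideanSpace ℝ (Fin n)) (t : ℝ) (a : EuclideanSpace ℝ (Fin n)) :
    ⟪dirVec u e2 t, a⟫ = ⟪u, a⟫ * Real.cos t + ⟪e2, a⟫ * Real.sin t := by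
  simp only [dirVec, inner_add_left, real_inner_smul_left]; ring

lemma dirVec_zero (u e2 : EuclideanSpace ℝ (Fin n)) : dirVec u e2 0 = u := by
  simp [dirVec]

lemma dirVec_pi (u e2 : EuclideanSpace ℝ (Fin n)) : dirVec u e2 π = -u := by
  simp [dirVec]

lemma vol_inter_ball_ne_top (X : Set (EuclideanSpace ℝ (Fin n))) : volume (X ∩ B) ≠ ⊤ :=
  (lt_of_le_of_lt (measure_mono Set.inter_subset_right) measure_closedBall_lt_top).ne

variable {u e2 : EuclideanSpace ℝ (Fin n)} (hu : ‖u‖ = 1) (he : ‖e2‖ = 1) (hue : ⟪u, e2⟫ = 0)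
include hu he hue

lemma vol_shift (s t ψ : ℝ) :
    volume (Sset u e2 (s + ψ) (t + ψ) ∩ B) = volume (Sset u e2 s t ∩ B) := by
  have hT := (rotEquiv hu he hue (-ψ)).measurePreserving
  have hpre : (⇑(rotEquiv hu he hue (-ψ))) ⁻¹' (Sset u e2 s t ∩ B)
      = Sset u e2 (s + ψ) (t + ψ) ∩ B := by
    ext a
    simp only [Set.mem_preimage, Set.mem_inter_iff, Sset, Set.mem_setOf_eq,
      Metric.mem_closedBall, dist_zero_right]
    rw [rotEquiv_apply, inner_dirVec_rot hu he hue, inner_dirVec_rot hu he hue]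
    rw [show s - -ψ = s + ψ by ring, show t - -ψ = t + ψ by ring]
    rw [show ‖rotMap u e2 (-ψ) a‖ = ‖a‖ from rot_norm hu he hue _ a]
  rw [← hpre, hT.measure_preimage]
  exact ((measurableSet_Sset u e2 s t).inter measurableSet_closedBall).nullMeasurableSet

omit hu he hue in
lemma half_vol (w : EuclideanSpace ℝ (Fin n)) (hw : w ≠ 0) :
    volume ({a : EuclideanSpace ℝ (Fin n) | 0 < ⟪w, a⟫} ∩ B)
      + volume ({a : EuclideanSpace ℝ (Fin n) | 0 < ⟪w, a⟫} ∩ B) = volume B := by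
  have hneg : MeasurePreserving (fun a : EuclideanSpace ℝ (Fin n) => -a) volume volume :=
    Measure.measurePreserving_neg _
  have hpre : (fun a : EuclideanSpace ℝ (Fin n) => -a) ⁻¹'
      ({a : EuclideanSpace ℝ (Fin n) | 0 < ⟪w, a⟫} ∩ B)
      = {a : EuclideanSpace ℝ (Fin n) | ⟪w, a⟫ < 0} ∩ B := by
    ext a
    simp only [Set.mem_preimage, Set.mem_inter_iff, Set.mem_setOf_eq, Metric.mem_closedBall,
      dist_zero_right, inner_neg_right, norm_neg]
    constructor
    · rintro ⟨h1, h2⟩; exact ⟨by linarith, h2⟩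
    · rintro ⟨h1, h2⟩; exact ⟨by linarith, h2⟩
  have heq : volume ({a : EuclideanSpace ℝ (Fin n) | ⟪w, a⟫ < 0} ∩ B)
      = volume ({a : EuclideanSpace ℝ (Fin n) | 0 < ⟪w, a⟫} ∩ B) := by
    rw [← hpre, hneg.measure_preimage]
    exact ((measurableSet_posInner w).inter measurableSet_closedBall).nullMeasurableSet
  have hdisj : Disjoint ({a : EuclideanSpace ℝ (Fin n) | 0 < ⟪w, a⟫} ∩ B)
      ({a : EuclideanSpace ℝ (Fin n) | ⟪w, a⟫ < 0} ∩ B) := by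
    rw [Set.disjoint_left]
    rintro a ⟨h1, _⟩ ⟨h2, _⟩
    have h1' : (0:ℝ) < ⟪w, a⟫ := h1
    have h2' : (⟪w, a⟫:ℝ) < 0 := h2
    linarith
  have hmeas2 : MeasurableSet ({a : EuclideanSpace ℝ (Fin n) | ⟪w, a⟫ < 0} ∩ B) := by
    apply MeasurableSet.inter _ measurableSet_closedBall
    exact measurableSet_lt (continuous_inner_left w).measurable measurable_const
  have hunion : volume (({a : EuclideanSpace ℝ (Fin n) | 0 < ⟪w, a⟫} ∩ B)
      ∪ ({a : EuclideanSpace ℝ (Fin n) | ⟪w, a⟫ < 0} ∩ B))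
      = volume ({a : EuclideanSpace ℝ (Fin n) | 0 < ⟪w, a⟫} ∩ B)
        + volume ({a : EuclideanSpace ℝ (Fin n) | ⟪w, a⟫ < 0} ∩ B) :=
    measure_union hdisj hmeas2
  have hcover : (B : Set (EuclideanSpace ℝ (Fin n)))
      ⊆ (({a : EuclideanSpace ℝ (Fin n) | 0 < ⟪w, a⟫} ∩ B)
        ∪ ({a : EuclideanSpace ℝ (Fin n) | ⟪w, a⟫ < 0} ∩ B))
        ∪ {a : EuclideanSpace ℝ (Fin n) | ⟪w, a⟫ = 0} := by
    intro a ha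
    rcases lt_trichotomy (⟪w, a⟫ : ℝ) 0 with h | h | h
    · exact Or.inl (Or.inr ⟨h, ha⟩)
    · exact Or.inr h
    · exact Or.inl (Or.inl ⟨h, ha⟩)
  have hle1 : volume B ≤ volume ({a : EuclideanSpace ℝ (Fin n) | 0 < ⟪w, a⟫} ∩ B)
      + volume ({a : EuclideanSpace ℝ (Fin n) | ⟪w, a⟫ < 0} ∩ B) := by
    calc volume B ≤ volume ((({a : EuclideanSpace ℝ (Fin n) | 0 < ⟪w, a⟫} ∩ B)
          ∪ ({a : EuclideanSpace ℝ (Fin n) | ⟪w, a⟫ < 0} ∩ B))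
          ∪ {a : EuclideanSpace ℝ (Fin n) | ⟪w, a⟫ = 0}) := measure_mono hcover
      _ ≤ volume (({a : EuclideanSpace ℝ (Fin n) | 0 < ⟪w, a⟫} ∩ B)
          ∪ ({a : EuclideanSpace ℝ (Fin n) | ⟪w, a⟫ < 0} ∩ B))
          + volume {a : EuclideanSpace ℝ (Fin n) | ⟪w, a⟫ = 0} := measure_union_le _ _
      _ = _ := by rw [hyperplane_null w hw, add_zero, hunion]
  have hle2 : volume ({a : EuclideanSpace ℝ (Fin n) | 0 < ⟪w, a⟫} ∩ B)
      + volume ({a : EuclideanSpace ℝ (Fin n) | ⟪w, a⟫ < 0} ∩ B) ≤ volume B := by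
    rw [← hunion]
    apply measure_mono
    apply Set.union_subset Set.inter_subset_right Set.inter_subset_right
  rw [heq] at hle1 hle2
  exact le_antisymm hle2 hle1
end measure2

section wedge
variable {n : ℕ}
local notation "B" => Metric.closedBall (0 : EuclideanSpace ℝ (Fin n)) 1

lemma Sset_split (u e2 : EuclideanSpace ℝ (Fin n)) (δ1 δ2 : ℝ)
    (h1 : 0 < δ1) (h2 : 0 < δ2) (h3 : δ1 + δ2 < π) :
    Sset u e2 0 (δ1 + δ2) = Sset u e2 0 δ1 ∪ Sset u e2 δ1 (δ1 + δ2) := by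
  ext a
  simp only [Sset, Set.mem_setOf_eq, Set.mem_union, inner_dirVec, Real.cos_zero, Real.sin_zero,
    mul_one, mul_zero, add_zero]
  constructor
  · rintro ⟨hp, hend⟩
    by_cases hmid : ⟪u, a⟫ * Real.cos δ1 + ⟪e2, a⟫ * Real.sin δ1 ≤ 0
    · exact Or.inl ⟨hp, hmid⟩
    · push_neg at hmid
      exact Or.inr ⟨hmid, hend⟩
  · rintro (⟨hp, hmid⟩ | ⟨hmid, hend⟩)
    · exact ⟨hp, arcL1 _ _ δ1 (δ1 + δ2) h1 (by linarith) (by linarith) hp hmid⟩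
    · exact ⟨arcL2 _ _ δ1 (δ1 + δ2) h1 (by linarith) h3 hmid hend, hend⟩

lemma Sset_disj (u e2 : EuclideanSpace ℝ (Fin n)) (s t r : ℝ) :
    Disjoint (Sset u e2 s t) (Sset u e2 t r) := by
  rw [Set.disjoint_left]
  rintro a ⟨_, h1⟩ ⟨h2, _⟩
  have h1' : (⟪dirVec u e2 t, a⟫:ℝ) ≤ 0 := h1
  have h2' : (0:ℝ) < ⟪dirVec u e2 t, a⟫ := h2
  linarith

variable {u e2 : EuclideanSpace ℝ (Fin n)} (hu : ‖u‖ = 1) (he : ‖e2‖ = 1) (hue : ⟪u, e2⟫ = 0)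
include hu he hue

lemma wedge_vol (δ : ℝ) (hδ : 0 < δ) (hδπ : δ < π) :
    (volume (Sset u e2 0 δ ∩ B)).toReal = δ / π * ((volume B).toReal / 2) := by
  have hu0 : u ≠ 0 := by
    intro h; rw [h, norm_zero] at hu; norm_num at hu
  apply cauchy_lin (fun δ => (volume (Sset u e2 0 δ ∩ B)).toReal) _ ?hadd ?hnn ?hnorm δ hδ hδπ
  case hnn => intro δ'; exact ENNReal.toReal_nonneg
  case hadd =>
    intro δ1 δ2 h1 h2 h3
    have hsplit := Sset_split u e2 δ1 δ2 h1 h2 h3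
    have hdisj : Disjoint (Sset u e2 0 δ1 ∩ B) (Sset u e2 δ1 (δ1 + δ2) ∩ B) :=
      ((Sset_disj u e2 0 δ1 (δ1 + δ2)).mono Set.inter_subset_left Set.inter_subset_left)
    have hvol : volume (Sset u e2 0 (δ1 + δ2) ∩ B)
        = volume (Sset u e2 0 δ1 ∩ B) + volume (Sset u e2 δ1 (δ1 + δ2) ∩ B) := by
      rw [hsplit, Set.union_inter_distrib_right]
      exact measure_union hdisj ((measurableSet_Sset u e2 _ _).inter measurableSet_closedBall)
    have hshift : volume (Sset u e2 δ1 (δ1 + δ2) ∩ B) = volume (Sset u e2 0 δ2 ∩ B) := by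
      have := vol_shift hu he hue 0 δ2 δ1
      rw [zero_add] at this
      rw [show δ1 + δ2 = δ2 + δ1 by ring]
      exact this
    rw [hvol, hshift, ENNReal.toReal_add (vol_inter_ball_ne_top _) (vol_inter_ball_ne_top _)]
  case hnorm =>
    intro δ' h1 h2
    have hdisj : Disjoint (Sset u e2 0 δ' ∩ B) (Sset u e2 δ' π ∩ B) :=
      ((Sset_disj u e2 0 δ' π).mono Set.inter_subset_left Set.inter_subset_left)
    have hvol : volume ((Sset u e2 0 δ' ∪ Sset u e2 δ' π) ∩ B)
        = volume (Sset u e2 0 δ' ∩ B) + volume (Sset u e2 δ' π ∩ B) := by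
      rw [Set.union_inter_distrib_right]
      exact measure_union hdisj ((measurableSet_Sset u e2 _ _).inter measurableSet_closedBall)
    have hkey : volume ((Sset u e2 0 δ' ∪ Sset u e2 δ' π) ∩ B)
        = volume ({a : EuclideanSpace ℝ (Fin n) | 0 < ⟪u, a⟫} ∩ B) := by
      apply le_antisymm
      · calc volume ((Sset u e2 0 δ' ∪ Sset u e2 δ' π) ∩ B)
            ≤ volume (({a : EuclideanSpace ℝ (Fin n) | 0 < ⟪u, a⟫} ∩ B)
              ∪ {a : EuclideanSpace ℝ (Fin n) | ⟪u, a⟫ = 0}) := by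
              apply measure_mono
              rintro a ⟨(⟨ha1, _⟩ | ⟨_, ha2⟩), haB⟩
              · rw [dirVec_zero] at ha1
                exact Or.inl ⟨ha1, haB⟩
              · rw [dirVec_pi, inner_neg_left] at ha2
                have : (0:ℝ) ≤ ⟪u, a⟫ := by linarith
                rcases eq_or_lt_of_le this with h | h
                · exact Or.inr h.symm
                · exact Or.inl ⟨h, haB⟩
          _ ≤ volume ({a : EuclideanSpace ℝ (Fin n) | 0 < ⟪u, a⟫} ∩ B)
              + volume {a : EuclideanSpace ℝ (Fin n) | ⟪u, a⟫ = 0} := measure_union_le _ _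
          _ = volume ({a : EuclideanSpace ℝ (Fin n) | 0 < ⟪u, a⟫} ∩ B) := by
              rw [hyperplane_null u hu0, add_zero]
      · apply measure_mono
        rintro a ⟨ha, haB⟩
        refine ⟨?_, haB⟩
        have hp : (0:ℝ) < ⟪u, a⟫ := ha
        by_cases hmid : (⟪dirVec u e2 δ', a⟫:ℝ) ≤ 0
        · exact Or.inl ⟨by rw [dirVec_zero]; exact hp, hmid⟩
        · push_neg at hmid
          refine Or.inr ⟨hmid, ?_⟩
          rw [dirVec_pi, inner_neg_left]
          linarith
    have hshift : volume (Sset u e2 δ' π ∩ B) = volume (Sset u e2 0 (π - δ') ∩ B) := by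
      have := vol_shift hu he hue 0 (π - δ') δ'
      rw [zero_add, show π - δ' + δ' = π by ring] at this
      exact this
    have hhalf := half_vol u hu0
    set v := volume ({a : EuclideanSpace ℝ (Fin n) | 0 < ⟪u, a⟫} ∩ B) with hv
    have hvne : v ≠ ⊤ := vol_inter_ball_ne_top _
    have e1 : volume (Sset u e2 0 δ' ∩ B) + volume (Sset u e2 0 (π - δ') ∩ B) = v := by
      rw [← hshift, ← hvol, hkey]
    have e2' : (volume (Sset u e2 0 δ' ∩ B)).toReal
        + (volume (Sset u e2 0 (π - δ') ∩ B)).toReal = v.toReal := by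
      rw [← ENNReal.toReal_add (vol_inter_ball_ne_top _) (vol_inter_ball_ne_top _), e1]
    have e3 : v.toReal + v.toReal = (volume B).toReal := by
      rw [← ENNReal.toReal_add hvne hvne, hhalf]
    rw [e2']
    linarith
end wedge

section helpers
variable {n : ℕ}
local notation "B" => Metric.closedBall (0 : EuclideanSpace ℝ (Fin n)) 1

lemma vol_eq_of_null (X Y Z1 Z2 : Set (EuclideanSpace ℝ (Fin n)))
    (hXY : X ⊆ Y ∪ Z1) (hYX : Y ⊆ X ∪ Z2)
    (h1 : volume Z1 = 0) (h2 : volume Z2 = 0) : volume X = volume Y := by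
  apply le_antisymm
  · calc volume X ≤ volume (Y ∪ Z1) := measure_mono hXY
      _ ≤ volume Y + volume Z1 := measure_union_le _ _
      _ = volume Y := by rw [h1, add_zero]
  · calc volume Y ≤ volume (X ∪ Z2) := measure_mono hYX
      _ ≤ volume X + volume Z2 := measure_union_le _ _
      _ = volume X := by rw [h2, add_zero]

lemma norm_dirVec {u e2 : EuclideanSpace ℝ (Fin n)} (hu : ‖u‖ = 1) (he : ‖e2‖ = 1)
    (hue : ⟪u, e2⟫ = 0) (t : ℝ) : ‖dirVec u e2 t‖ = 1 := by
  have h1 : ⟪u, u⟫ = 1 := by rw [real_inner_self_eq_norm_sq, hu]; norm_num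
  have h2 : ⟪e2, e2⟫ = 1 := by rw [real_inner_self_eq_norm_sq, he]; norm_num
  have h3 : ⟪e2, u⟫ = 0 := by rw [real_inner_comm]; exact hue
  have key : ⟪dirVec u e2 t, dirVec u e2 t⟫ = 1 := by
    simp only [dirVec, inner_add_left, inner_add_right, real_inner_smul_left,
      real_inner_smul_right, h1, h2, h3, hue]
    linear_combination Real.sin_sq_add_cos_sq t
  have key2 : ‖dirVec u e2 t‖^2 = 1 := by rw [← real_inner_self_eq_norm_sq]; exact key
  nlinarith [norm_nonneg (dirVec u e2 t)]

lemma sign_mul_pos {c t : ℝ} (hc : 0 < c) : (0 < c * t ↔ 0 < t) ∧ (c * t ≤ 0 ↔ t ≤ 0) := by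
  constructor
  · constructor <;> intro h <;> nlinarith
  · constructor <;> intro h <;> nlinarith

lemma swap_wedge_vol {u e2 : EuclideanSpace ℝ (Fin n)} (hu : ‖u‖ = 1) (he : ‖e2‖ = 1)
    (hue : ⟪u, e2⟫ = 0) (θ : ℝ) :
    volume (Sset u e2 θ 0 ∩ B) = volume (Sset u e2 0 θ ∩ B) := by
  have hneg : MeasurePreserving (fun a : EuclideanSpace ℝ (Fin n) => -a) volume volume :=
    Measure.measurePreserving_neg _
  have hpre : (fun a : EuclideanSpace ℝ (Fin n) => -a) ⁻¹' (Sset u e2 θ 0 ∩ B)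
      = {a : EuclideanSpace ℝ (Fin n) | ⟪dirVec u e2 θ, a⟫ < 0 ∧ 0 ≤ ⟪dirVec u e2 0, a⟫} ∩ B := by
    ext a
    simp only [Set.mem_preimage, Set.mem_inter_iff, Sset, Set.mem_setOf_eq,
      Metric.mem_closedBall, dist_zero_right, inner_neg_right, norm_neg]
    constructor
    · rintro ⟨⟨ha1, ha2⟩, ha3⟩; exact ⟨⟨by linarith, by linarith⟩, ha3⟩
    · rintro ⟨⟨ha1, ha2⟩, ha3⟩; exact ⟨⟨by linarith, by linarith⟩, ha3⟩
  have h1 : volume ((fun a : EuclideanSpace ℝ (Fin n) => -a) ⁻¹' (Sset u e2 θ 0 ∩ B))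
      = volume (Sset u e2 θ 0 ∩ B) := hneg.measure_preimage
    (((measurableSet_Sset u e2 θ 0).inter measurableSet_closedBall).nullMeasurableSet)
  rw [hpre] at h1
  rw [← h1]
  apply vol_eq_of_null _ _ {a : EuclideanSpace ℝ (Fin n) | ⟪dirVec u e2 0, a⟫ = 0}
      {a : EuclideanSpace ℝ (Fin n) | ⟪dirVec u e2 θ, a⟫ = 0}
  · rintro a ⟨⟨ha1, ha2⟩, haB⟩
    rcases eq_or_lt_of_le ha2 with h | h
    · exact Or.inr h.symm
    · exact Or.inl ⟨⟨h, ha1.le⟩, haB⟩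
  · rintro a ⟨⟨ha1, ha2⟩, haB⟩
    rcases eq_or_lt_of_le ha2 with h | h
    · exact Or.inr h
    · exact Or.inl ⟨⟨h, ha1.le⟩, haB⟩
  · exact hyperplane_null _ (by
      intro h0
      have := norm_dirVec hu he hue 0
      rw [h0, norm_zero] at this; norm_num at this)
  · exact hyperplane_null _ (by
      intro h0
      have := norm_dirVec hu he hue θ
      rw [h0, norm_zero] at this; norm_num at this)
end helpers

lemma one_sub_sq_nonneg {d : ℝ} (h : |d| ≤ 1) : 0 ≤ 1 - d^2 := by
  nlinarith [sq_abs d, abs_nonneg d]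

/-- For the thresholded linear environment with weights uniform on the unit
ball in ℝⁿ (n ≥ 2), the CDM between two nonzero vectors equals θ/π, where θ is
the angle between them. -/
theorem cdm_thresholded_linear (n : ℕ) (hn : 2 ≤ n)
    (x x' : EuclideanSpace ℝ (Fin n)) (hx : x ≠ 0) (hx' : x' ≠ 0)
    (H : ℝ → ℝ) (hH : ∀ t, H t = if 0 < t then 1 else 0) :
    (∫ a in Metric.closedBall (0 : EuclideanSpace ℝ (Fin n)) 1,
        |H (∑ i, a i * x i) - H (∑ i, a i * x' i)|) /
      (volume (Metric.closedBall (0 : EuclideanSpace ℝ (Fin n)) 1)).toReal =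
    Real.arccos ((∑ i, x i * x' i) / (‖x‖ * ‖x'‖)) / Real.pi := by
  classical
  set B := Metric.closedBall (0 : EuclideanSpace ℝ (Fin n)) 1 with hB
  have hip : ∀ a b : EuclideanSpace ℝ (Fin n), (⟪a, b⟫ : ℝ) = ∑ i, a i * b i := by
    intro a b
    simp [PiLp.inner_apply, RCLike.inner_apply, conj_trivial]
    exact Finset.sum_congr rfl fun i _ => mul_comm _ _
  -- the symmetric-difference set
  set D : Set (EuclideanSpace ℝ (Fin n)) :=
    {a | (0 < ⟪x, a⟫ ∧ ⟪x', a⟫ ≤ 0) ∨ (0 < ⟪x', a⟫ ∧ ⟪x, a⟫ ≤ 0)} with hD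
  have hDmeas : MeasurableSet D := by
    apply MeasurableSet.union
    · exact (measurableSet_posInner x).inter
        (measurableSet_le (continuous_inner_left x').measurable measurable_const)
    · exact (measurableSet_posInner x').inter
        (measurableSet_le (continuous_inner_left x).measurable measurable_const)
  have hptw : ∀ a : EuclideanSpace ℝ (Fin n),
      |H (∑ i, a i * x i) - H (∑ i, a i * x' i)| = D.indicator (fun _ => (1:ℝ)) a := by
    intro a
    have hp : (∑ i, a i * x i) = ⟪x, a⟫ := by
      rw [hip x a]; exact Finset.sum_congr rfl fun i _ => mul_comm _ _
    have hq : (∑ i, a i * x' i) = ⟪x', a⟫ := by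
      rw [hip x' a]; exact Finset.sum_congr rfl fun i _ => mul_comm _ _
    rw [hH, hH, hp, hq]
    simp only [Set.indicator_apply, hD, Set.mem_setOf_eq]
    by_cases h1 : (0:ℝ) < ⟪x, a⟫ <;> by_cases h2 : (0:ℝ) < ⟪x', a⟫
    · rw [if_pos h1, if_pos h2, if_neg]
      · norm_num
      · rintro (⟨_, hc⟩ | ⟨_, hc⟩) <;> [linarith; linarith]
    · rw [if_pos h1, if_neg h2, if_pos (Or.inl ⟨h1, not_lt.mp h2⟩)]; norm_num
    · rw [if_neg h1, if_pos h2, if_pos (Or.inr ⟨h2, not_lt.mp h1⟩)]; norm_num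
    · rw [if_neg h1, if_neg h2, if_neg]
      · norm_num
      · rintro (⟨hc, _⟩ | ⟨hc, _⟩) <;> [linarith; linarith]
  have hintegral : (∫ a in B, |H (∑ i, a i * x i) - H (∑ i, a i * x' i)|)
      = (volume (D ∩ B)).toReal := by
    rw [setIntegral_congr_fun measurableSet_closedBall (fun a _ => hptw a),
      MeasureTheory.setIntegral_indicator hDmeas, setIntegral_const, Set.inter_comm]
    simp
    rfl
  have hsum : (∑ i, x i * x' i) = ⟪x, x'⟫ := (hip x x').symm
  set d : ℝ := ⟪x, x'⟫ / (‖x‖ * ‖x'‖) with hd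
  have habs : |d| ≤ 1 := abs_real_inner_div_norm_mul_norm_le_one x x'
  have hd1 : d ≤ 1 := (abs_le.mp habs).2
  have hdm1 : -1 ≤ d := (abs_le.mp habs).1
  have hvolB_pos : 0 < (volume B).toReal :=
    ENNReal.toReal_pos (Metric.measure_closedBall_pos volume 0 one_pos).ne' measure_closedBall_lt_top.ne
  rw [hintegral, hsum, ← hd]
  rcases eq_or_lt_of_le hd1 with hdeq1 | hdlt1
  · -- parallel case
    obtain ⟨-, r, hr, hx'r⟩ := (real_inner_div_norm_mul_norm_eq_one_iff x x').mp hdeq1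
    have hDempty : D = ∅ := by
      ext a
      simp only [hD, Set.mem_setOf_eq, Set.mem_empty_iff_false, iff_false]
      rw [hx'r, real_inner_smul_left]
      rintro (⟨h1, h2⟩ | ⟨h1, h2⟩) <;> nlinarith
    rw [hDempty, Set.empty_inter, measure_empty, hdeq1, Real.arccos_one]
    simp
  rcases eq_or_lt_of_le hdm1 with hdeqm1 | hdgtm1
  · -- antiparallel case
    obtain ⟨-, r, hr, hx'r⟩ := (real_inner_div_norm_mul_norm_eq_neg_one_iff x x').mp hdeqm1.symm
    have hDhyp : D = {a : EuclideanSpace ℝ (Fin n) | ⟪x, a⟫ ≠ 0} := by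
      ext a
      simp only [hD, Set.mem_setOf_eq]
      rw [hx'r, real_inner_smul_left]
      constructor
      · rintro (⟨h1, h2⟩ | ⟨h1, h2⟩) <;> intro hc <;> rw [hc] at h1 h2 <;> nlinarith
      · intro hne
        rcases lt_or_gt_of_ne hne with h | h
        · exact Or.inr ⟨by nlinarith, by nlinarith⟩
        · exact Or.inl ⟨by nlinarith, by nlinarith⟩
    have hvol : volume (D ∩ B) = volume B := by
      rw [hDhyp]
      apply le_antisymm (measure_mono Set.inter_subset_right)
      calc volume B ≤ volume (({a : EuclideanSpace ℝ (Fin n) | ⟪x, a⟫ ≠ 0} ∩ B)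
            ∪ {a : EuclideanSpace ℝ (Fin n) | ⟪x, a⟫ = 0}) := by
            apply measure_mono
            intro a ha
            by_cases h : (⟪x, a⟫:ℝ) = 0
            · exact Or.inr h
            · exact Or.inl ⟨h, ha⟩
        _ ≤ volume ({a : EuclideanSpace ℝ (Fin n) | ⟪x, a⟫ ≠ 0} ∩ B)
            + volume {a : EuclideanSpace ℝ (Fin n) | ⟪x, a⟫ = 0} := measure_union_le _ _
        _ = volume ({a : EuclideanSpace ℝ (Fin n) | ⟪x, a⟫ ≠ 0} ∩ B) := by
            rw [hyperplane_null x hx, add_zero]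
    rw [hvol, ← hdeqm1, Real.arccos_neg_one, div_self hvolB_pos.ne', div_self Real.pi_ne_zero]
  · -- generic case
    have hnx : (0:ℝ) < ‖x‖ := norm_pos_iff.mpr hx
    have hnx' : (0:ℝ) < ‖x'‖ := norm_pos_iff.mpr hx'
    set u : EuclideanSpace ℝ (Fin n) := ‖x‖⁻¹ • x with hu_def
    have hu : ‖u‖ = 1 := by
      rw [hu_def, norm_smul, norm_inv, norm_norm, inv_mul_cancel₀ hnx.ne']
    have hxu : x = ‖x‖ • u := by
      rw [hu_def, smul_smul, mul_inv_cancel₀ hnx.ne', one_smul]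
    have huu : (⟪u, u⟫:ℝ) = 1 := by rw [real_inner_self_eq_norm_sq, hu]; norm_num
    set p0 : ℝ := ⟪u, x'⟫ with hp0_def
    have hp0 : p0 = d * ‖x'‖ := by
      rw [hp0_def, hu_def, real_inner_smul_left, hd]
      rw [hip x x']
      field_simp
    set w : EuclideanSpace ℝ (Fin n) := x' - p0 • u with hw_def
    have huw : (⟪u, w⟫:ℝ) = 0 := by
      rw [hw_def, inner_sub_right, real_inner_smul_right, huu, hp0_def]; ring
    have hnw_sq : ‖w‖^2 = ‖x'‖^2 * (1 - d^2) := by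
      have : (⟪w, w⟫:ℝ) = ⟪x', x'⟫ - p0^2 := by
        rw [hw_def]
        simp only [inner_sub_left, inner_sub_right, real_inner_smul_left, real_inner_smul_right,
          huu, hp0_def, real_inner_comm x' u]
        ring
      rw [← real_inner_self_eq_norm_sq, this, real_inner_self_eq_norm_sq, hp0]
      ring
    have hw0 : w ≠ 0 := by
      intro hweq
      rw [hweq, norm_zero] at hnw_sq
      have h0 : ‖x'‖^2 * (1 - d^2) = 0 := by rw [← hnw_sq]; norm_num
      rcases mul_eq_zero.mp h0 with h | h
      · have : (0:ℝ) < ‖x'‖^2 := by positivity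
        linarith
      · have h4 : (d-1)*(d+1) = 0 := by linarith [h]; 
        rcases mul_eq_zero.mp h4 with h5 | h5 <;> linarith
    have hnw : (0:ℝ) < ‖w‖ := norm_pos_iff.mpr hw0
    set e2 : EuclideanSpace ℝ (Fin n) := ‖w‖⁻¹ • w with he2_def
    have he : ‖e2‖ = 1 := by
      rw [he2_def, norm_smul, norm_inv, norm_norm, inv_mul_cancel₀ hnw.ne']
    have hue : (⟪u, e2⟫:ℝ) = 0 := by
      rw [he2_def, real_inner_smul_right, huw, mul_zero]
    set θ : ℝ := Real.arccos d with hθ_def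
    have hθpos : 0 < θ := Real.arccos_pos.mpr hdlt1
    have hθltπ : θ < π := by
      rw [hθ_def, Real.arccos]
      have := Real.neg_pi_div_two_lt_arcsin.mpr hdgtm1
      linarith
    have hcosθ : Real.cos θ = d := Real.cos_arccos hdm1 hd1
    have hsinθ : Real.sin θ = Real.sqrt (1 - d^2) := Real.sin_arccos d
    have hsinθ_val : ‖x'‖ * Real.sin θ = ‖w‖ := by
      rw [hsinθ]
      have h1 : (0:ℝ) ≤ 1 - d^2 := one_sub_sq_nonneg habs
      have hsq : (‖x'‖ * Real.sqrt (1 - d^2))^2 = ‖w‖^2 := by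
        rw [mul_pow, Real.sq_sqrt h1, hnw_sq]
      have := congrArg Real.sqrt hsq
      rwa [Real.sqrt_sq (mul_nonneg hnx'.le (Real.sqrt_nonneg _)),
        Real.sqrt_sq (norm_nonneg w)] at this
    have hx'v : x' = ‖x'‖ • dirVec u e2 θ := by
      rw [dirVec, smul_add, smul_smul, smul_smul, hcosθ]
      rw [smul_smul ‖x'‖ (Real.sin θ), hsinθ_val, he2_def, smul_smul,
        mul_inv_cancel₀ hnw.ne', one_smul]
      rw [show ‖x'‖ * d * ‖x‖⁻¹ = p0 * ‖x‖⁻¹ from by rw [hp0]; ring]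
      rw [← smul_smul, ← hu_def, hw_def]
      abel
    -- identify D with the union of two wedges
    have hxa : ∀ a : EuclideanSpace ℝ (Fin n), (⟪x, a⟫:ℝ) = ‖x‖ * ⟪dirVec u e2 0, a⟫ := by
      intro a
      rw [dirVec_zero]
      conv_lhs => rw [hxu]
      rw [real_inner_smul_left]
    have hx'a : ∀ a : EuclideanSpace ℝ (Fin n), (⟪x', a⟫:ℝ) = ‖x'‖ * ⟪dirVec u e2 θ, a⟫ := by
      intro a
      conv_lhs => rw [hx'v]
      rw [real_inner_smul_left]
    have hDeq : D = Sset u e2 0 θ ∪ Sset u e2 θ 0 := by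
      ext a
      simp only [hD, Set.mem_setOf_eq, Set.mem_union, Sset]
      rw [hxa a, hx'a a,
        (sign_mul_pos hnx).1, (sign_mul_pos hnx).2, (sign_mul_pos hnx').1, (sign_mul_pos hnx').2]
    have hdisj : Disjoint (Sset u e2 0 θ ∩ B) (Sset u e2 θ 0 ∩ B) :=
      (Sset_disj u e2 0 θ 0).mono Set.inter_subset_left Set.inter_subset_left
    have hvolD : volume (D ∩ B)
        = volume (Sset u e2 0 θ ∩ B) + volume (Sset u e2 θ 0 ∩ B) := by
      rw [hDeq, Set.union_inter_distrib_right]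
      exact measure_union hdisj ((measurableSet_Sset u e2 _ _).inter measurableSet_closedBall)
    have hswap := swap_wedge_vol hu he hue θ
    have hwedge := wedge_vol hu he hue θ hθpos hθltπ
    have hfinal : (volume (D ∩ B)).toReal = θ / π * (volume B).toReal := by
      rw [hvolD, ENNReal.toReal_add (vol_inter_ball_ne_top _) (vol_inter_ball_ne_top _),
        hswap, hwedge]
      ring
    rw [hfinal, hθ_def]
    field_simp
end

section
/- For any quantization points x⃗ = {x₁,…,x_k} and any partition X⃗ = {X₁,…,X_k} of X faithful to x⃗ (i.e., x_i ∈ X_i), the reconstruction error of the environment satisfies E_F(x⃗, X⃗) ≥ E_F(x⃗, X⃗^ρ), where X⃗^ρ is the Voronoi partition induced by the CDM ρ. That is, the CDM-induced Voronoi partition minimizes the expected approximation error of piecewise-constant approximations of functions in the environment. -/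
open MeasureTheory

/-- For any faithful partition X⃗ of X, the reconstruction error of the
environment is at least that of the Voronoi partition induced by the CDM:
E_F(x⃗, X⃗) ≥ E_F(x⃗, X⃗^ρ). -/
theorem voronoi_partition_optimal
    {Ω X Y : Type*} [MeasurableSpace Ω] [MeasurableSpace X]
    (Q : Measure Ω) [IsProbabilityMeasure Q]
    (P : Measure X) [IsProbabilityMeasure P]
    (g : Ω → X → Y) (σ : Y → Y → ℝ)
    (ρ : X → X → ℝ)
    (hρ : ∀ x x', ρ x x' = ∫ ω, σ (g ω x) (g ω x') ∂Q)
    (hint : ∀ x x', Integrable (fun ω => σ (g ω x) (g ω x')) Q)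
    (k : ℕ) (pts : Fin k → X)
    -- an arbitrary partition {X₁,…,X_k}, encoded by the assignment map idx
    (idx : X → Fin k)
    -- faithfulness: x_i ∈ X_i
    (hfaithful : ∀ i, idx (pts i) = i)
    -- Voronoi assignment induced by ρ, ties broken by the smallest index
    (q : X → Fin k)
    (hq : ∀ z, IsLeast {i : Fin k | ∀ j, ρ z (pts i) ≤ ρ z (pts j)} (q z))
    -- Fubini hypotheses: joint integrability of both approximation errors
    (hfub₁ : Integrable (fun p : Ω × X => σ (g p.1 p.2) (g p.1 (pts (idx p.2))))
      (Q.prod P))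
    (hfub₂ : Integrable (fun p : Ω × X => σ (g p.1 p.2) (g p.1 (pts (q p.2))))
      (Q.prod P)) :
    ∫ ω, ∫ z, σ (g ω z) (g ω (pts (idx z))) ∂P ∂Q ≥
      ∫ ω, ∫ z, σ (g ω z) (g ω (pts (q z))) ∂P ∂Q := by
  have e1 := integral_integral_swap (μ := Q) (ν := P) (f := fun ω z => σ (g ω z) (g ω (pts (idx z)))) hfub₁
  have e2 := integral_integral_swap (μ := Q) (ν := P) (f := fun ω z => σ (g ω z) (g ω (pts (q z)))) hfub₂
  rw [e1, e2]
  refine integral_mono hfub₂.integral_prod_right hfub₁.integral_prod_right ?_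
  intro z
  have h1 : (∫ ω, σ (g ω z) (g ω (pts (q z))) ∂Q) = ρ z (pts (q z)) := (hρ _ _).symm
  have h2 : (∫ ω, σ (g ω z) (g ω (pts (idx z))) ∂Q) = ρ z (pts (idx z)) := (hρ _ _).symm
  simp only [h1, h2]
  exact (hq z).1 (idx z)
end

section
/- With the quadratic-environment CDM ρ(x,y) = |x² - y²| on [0,1] and uniform P, any interior optimal quantization point x_i (1 < i < k, ordered 0 ≤ x₁ ≤ … ≤ x_k ≤ 1) of the reconstruction error E_ρ(x⃗) = ∫₀¹ min_i |x² - x_i²| dx satisfies x_i² = (1/4)(x_{i-1}² + x_{i+1}²) + (1/(4√2))·√(x_{i-1}⁴ + 6 x_{i-1}² x_{i+1}² + x_{i+1}⁴). -/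
open MeasureTheory intervalIntegral

/-- Algebraic step: solving the stationarity equation. -/
lemma quant_alg (a b m : ℝ)
    (h : 2*m = Real.sqrt ((a^2+m^2)/2) + Real.sqrt ((m^2+b^2)/2)) :
    m ^ 2 = (1/4) * (a^2 + b^2) +
      (1/(4*Real.sqrt 2)) * Real.sqrt (a^4 + 6*a^2*b^2 + b^4) := by
  have hw1 : (0:ℝ) ≤ (a^2+m^2)/2 := by positivity
  have hw2 : (0:ℝ) ≤ (m^2+b^2)/2 := by positivity
  have hsq : (2*m)^2 = ((a^2+m^2)/2) + ((m^2+b^2)/2)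
      + 2 * Real.sqrt (((a^2+m^2)/2) * ((m^2+b^2)/2)) := by
    rw [h]
    have := Real.sq_sqrt hw1
    have := Real.sq_sqrt hw2
    have := Real.sqrt_mul hw1 ((m^2+b^2)/2)
    nlinarith [Real.sqrt_nonneg ((a^2+m^2)/2), Real.sqrt_nonneg ((m^2+b^2)/2)]
  have hprod : Real.sqrt (((a^2+m^2)/2) * ((m^2+b^2)/2))
      = Real.sqrt ((a^2+m^2) * (m^2+b^2)) / 2 := by
    rw [show ((a^2+m^2)/2) * ((m^2+b^2)/2) = ((a^2+m^2) * (m^2+b^2)) / 2^2 by ring,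
      Real.sqrt_div (by positivity), Real.sqrt_sq (by norm_num : (0:ℝ) ≤ 2)]
  rw [hprod] at hsq
  have hkey : 3*m^2 - (a^2+b^2)/2 = Real.sqrt ((a^2+m^2) * (m^2+b^2)) := by
    nlinarith [hsq]
  have hge : Real.sqrt ((a^2+m^2) * (m^2+b^2)) ≥ Real.sqrt (m^2 * m^2) := by
    apply Real.sqrt_le_sqrt; nlinarith [sq_nonneg a, sq_nonneg b, sq_nonneg m]
  rw [show m^2*m^2 = (m^2)^2 by ring, Real.sqrt_sq (sq_nonneg m)] at hge
  have hy : 0 ≤ m^2 - (a^2+b^2)/4 := by linarith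
  have hsq2 : (3*m^2 - (a^2+b^2)/2)^2 = (a^2+m^2) * (m^2+b^2) := by
    rw [hkey]; exact Real.sq_sqrt (by positivity)
  have hS : a^4 + 6*a^2*b^2 + b^4 = ((4*Real.sqrt 2) * (m^2 - (a^2+b^2)/4))^2 := by
    have h2 : (Real.sqrt 2)^2 = 2 := Real.sq_sqrt (by norm_num)
    nlinarith [hsq2, h2]
  rw [hS, Real.sqrt_sq (by positivity)]
  have hne : Real.sqrt 2 ≠ 0 := by positivity
  field_simp
  ring

/-- Derivative of w(t)·√(w(t)) with w(t) = (c+t²)/2. -/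
lemma quant_deriv (c t : ℝ) (hc : 0 ≤ c) (ht : 0 < t) :
    HasDerivAt (fun s : ℝ => ((c+s^2)/2) * Real.sqrt ((c+s^2)/2))
      ((3/2) * t * Real.sqrt ((c+t^2)/2)) t := by
  have hwpos : 0 < (c+t^2)/2 := by positivity
  have hw : HasDerivAt (fun s : ℝ => (c+s^2)/2) t t := by
    have h := (((hasDerivAt_const t c).add ((hasDerivAt_id t).pow 2)).div_const 2)
    refine h.congr_deriv ?_
    simp
  have hs : HasDerivAt (fun s : ℝ => Real.sqrt ((c+s^2)/2))
      (1/(2*Real.sqrt ((c+t^2)/2)) * t) t :=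
    (Real.hasDerivAt_sqrt (ne_of_gt hwpos)).comp t hw
  have := hw.mul hs
  refine this.congr_deriv ?_
  set S := Real.sqrt ((c+t^2)/2) with hS
  have hsne : S ≠ 0 := by positivity
  have h2 : S^2 = (c+t^2)/2 := Real.sq_sqrt hwpos.le
  rw [← h2]
  field_simp
  ring

/-- One-sided comparison of infima that differ only at index i. -/
lemma iInf_le_iInf_ignore {k : ℕ} (f g : Fin k → ℝ) (i j₀ : Fin k) (hj : j₀ ≠ i)
    (hbf : BddBelow (Set.range f)) (heq : ∀ j, j ≠ i → f j = g j) (hg : g j₀ ≤ g i) :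
    iInf f ≤ iInf g := by
  have : Nonempty (Fin k) := ⟨i⟩
  refine le_ciInf fun j => ?_
  by_cases h : j = i
  · subst h
    calc iInf f ≤ f j₀ := ciInf_le hbf j₀
    _ = g j₀ := heq j₀ hj
    _ ≤ g j := hg
  · rw [← heq j h]; exact ciInf_le hbf j

/-- Explicit integral of the three-way min. -/
lemma quant_integral (a b t : ℝ) (ha : 0 ≤ a) (hat : a < t) (htb : t < b) :
    ∫ x in a..b, min (x^2 - a^2) (min |x^2 - t^2| (b^2 - x^2))
      = (4/3)*t^3 - (4/3)*(((a^2+t^2)/2) * Real.sqrt ((a^2+t^2)/2))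
        - (4/3)*(((t^2+b^2)/2) * Real.sqrt ((t^2+b^2)/2)) + (2/3)*(a^3+b^3) := by
  set u := Real.sqrt ((a^2+t^2)/2) with hu
  set v := Real.sqrt ((t^2+b^2)/2) with hv
  have ht0 : 0 < t := lt_of_le_of_lt ha hat
  have hb0 : 0 < b := lt_trans ht0 htb
  have hu2 : u^2 = (a^2+t^2)/2 := Real.sq_sqrt (by positivity)
  have hv2 : v^2 = (t^2+b^2)/2 := Real.sq_sqrt (by positivity)
  have hu0 : 0 ≤ u := Real.sqrt_nonneg _
  have hv0 : 0 ≤ v := Real.sqrt_nonneg _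
  clear_value u v
  have hat2 : a^2 ≤ t^2 := by nlinarith
  have htb2 : t^2 ≤ b^2 := by nlinarith
  have hau : a ≤ u := by nlinarith
  have hut : u ≤ t := by nlinarith
  have htv : t ≤ v := by nlinarith
  have hvb : v ≤ b := by nlinarith
  have hcont : Continuous (fun x : ℝ => min (x^2 - a^2) (min |x^2 - t^2| (b^2 - x^2))) := by
    apply Continuous.min
    · exact (continuous_pow 2).sub continuous_const
    · exact Continuous.min (((continuous_pow 2).sub continuous_const).abs)
        (continuous_const.sub (continuous_pow 2))
  have hii : ∀ p q : ℝ, IntervalIntegrable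
      (fun x : ℝ => min (x^2 - a^2) (min |x^2 - t^2| (b^2 - x^2))) volume p q :=
    fun p q => hcont.intervalIntegrable p q
  -- split the integral
  have hsplit : ∫ x in a..b, min (x^2 - a^2) (min |x^2 - t^2| (b^2 - x^2))
      = (∫ x in a..u, min (x^2 - a^2) (min |x^2 - t^2| (b^2 - x^2)))
      + (∫ x in u..t, min (x^2 - a^2) (min |x^2 - t^2| (b^2 - x^2)))
      + (∫ x in t..v, min (x^2 - a^2) (min |x^2 - t^2| (b^2 - x^2)))
      + (∫ x in v..b, min (x^2 - a^2) (min |x^2 - t^2| (b^2 - x^2))) := by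
    rw [integral_add_adjacent_intervals (hii a u) (hii u t),
      integral_add_adjacent_intervals (hii a t) (hii t v),
      integral_add_adjacent_intervals (hii a v) (hii v b)]
  rw [hsplit]
  have hI1 : ∫ x in a..u, min (x^2 - a^2) (min |x^2 - t^2| (b^2 - x^2))
      = (u^3 - a^3)/3 - a^2*(u-a) := by
    rw [show ∫ x in a..u, min (x^2 - a^2) (min |x^2 - t^2| (b^2 - x^2))
        = ∫ x in a..u, (x^2 - a^2) from integral_congr ?_]
    · rw [integral_sub ((continuous_pow 2).intervalIntegrable a u)
        (intervalIntegrable_const), integral_pow, intervalIntegral.integral_const]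
      simp [smul_eq_mul]; ring
    · intro x hx
      rw [Set.uIcc_of_le hau] at hx
      obtain ⟨hx1, hx2⟩ := hx
      have hx0 : 0 ≤ x := le_trans ha hx1
      have hxu : x^2 ≤ u^2 := pow_le_pow_left₀ hx0 hx2 2
      have habs : |x^2 - t^2| = t^2 - x^2 := by
        rw [abs_of_nonpos (sub_nonpos.mpr (pow_le_pow_left₀ hx0 (le_trans hx2 hut) 2))]; ring
      have e1 : x^2 - a^2 ≤ t^2 - x^2 := by linarith
      have e2 : x^2 - a^2 ≤ b^2 - x^2 := by linarith
      simp only [habs]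
      rw [min_eq_left (le_min e1 e2)]
  have hI2 : ∫ x in u..t, min (x^2 - a^2) (min |x^2 - t^2| (b^2 - x^2))
      = t^2*(t-u) - (t^3 - u^3)/3 := by
    rw [show ∫ x in u..t, min (x^2 - a^2) (min |x^2 - t^2| (b^2 - x^2))
        = ∫ x in u..t, (t^2 - x^2) from integral_congr ?_]
    · rw [integral_sub intervalIntegrable_const ((continuous_pow 2).intervalIntegrable u t),
        integral_pow, intervalIntegral.integral_const]
      simp [smul_eq_mul]; ring
    · intro x hx
      rw [Set.uIcc_of_le hut] at hx
      obtain ⟨hx1, hx2⟩ := hx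
      have hx0 : 0 ≤ x := le_trans hu0 hx1
      have hxu : u^2 ≤ x^2 := pow_le_pow_left₀ hu0 hx1 2
      have habs : |x^2 - t^2| = t^2 - x^2 := by
        rw [abs_of_nonpos (sub_nonpos.mpr (pow_le_pow_left₀ hx0 hx2 2))]; ring
      have e1 : t^2 - x^2 ≤ x^2 - a^2 := by linarith
      have e2 : t^2 - x^2 ≤ b^2 - x^2 := by linarith
      simp only [habs]
      rw [min_eq_left e2, min_eq_right e1]
  have hI3 : ∫ x in t..v, min (x^2 - a^2) (min |x^2 - t^2| (b^2 - x^2))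
      = (v^3 - t^3)/3 - t^2*(v-t) := by
    rw [show ∫ x in t..v, min (x^2 - a^2) (min |x^2 - t^2| (b^2 - x^2))
        = ∫ x in t..v, (x^2 - t^2) from integral_congr ?_]
    · rw [integral_sub ((continuous_pow 2).intervalIntegrable t v)
        (intervalIntegrable_const), integral_pow, intervalIntegral.integral_const]
      simp [smul_eq_mul]; ring
    · intro x hx
      rw [Set.uIcc_of_le htv] at hx
      obtain ⟨hx1, hx2⟩ := hx
      have hx0 : 0 ≤ x := le_trans ht0.le hx1
      have hxv : x^2 ≤ v^2 := pow_le_pow_left₀ hx0 hx2 2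
      have hxt : t^2 ≤ x^2 := pow_le_pow_left₀ ht0.le hx1 2
      have habs : |x^2 - t^2| = x^2 - t^2 := abs_of_nonneg (by linarith)
      have e1 : x^2 - t^2 ≤ b^2 - x^2 := by linarith
      have e2 : x^2 - t^2 ≤ x^2 - a^2 := by linarith
      simp only [habs]
      rw [min_eq_left e1, min_eq_right e2]
  have hI4 : ∫ x in v..b, min (x^2 - a^2) (min |x^2 - t^2| (b^2 - x^2))
      = b^2*(b-v) - (b^3 - v^3)/3 := by
    rw [show ∫ x in v..b, min (x^2 - a^2) (min |x^2 - t^2| (b^2 - x^2))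
        = ∫ x in v..b, (b^2 - x^2) from integral_congr ?_]
    · rw [integral_sub intervalIntegrable_const ((continuous_pow 2).intervalIntegrable v b),
        integral_pow, intervalIntegral.integral_const]
      simp [smul_eq_mul]; ring
    · intro x hx
      rw [Set.uIcc_of_le hvb] at hx
      obtain ⟨hx1, hx2⟩ := hx
      have hx0 : 0 ≤ x := le_trans hv0 hx1
      have hxv : v^2 ≤ x^2 := pow_le_pow_left₀ hv0 hx1 2
      have hxt : t^2 ≤ x^2 := by linarith [hv2, htb2, hxv]
      have habs : |x^2 - t^2| = x^2 - t^2 := abs_of_nonneg (by linarith)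
      have e1 : b^2 - x^2 ≤ x^2 - t^2 := by linarith
      have e2 : b^2 - x^2 ≤ x^2 - a^2 := by linarith
      simp only [habs]
      rw [min_eq_right e1, min_eq_right e2]
  rw [hI1, hI2, hI3, hI4]
  linear_combination (2/3*u) * hu2 + (2/3*v) * hv2


/-- Stationarity condition for interior optimal quantization points of the
quadratic-environment CDM ρ(x,y) = |x² - y²| on [0,1] with uniform P:
x_i² = (1/4)(x_{i-1}² + x_{i+1}²)
        + (1/(4√2))√(x_{i-1}⁴ + 6 x_{i-1}² x_{i+1}² + x_{i+1}⁴). -/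
theorem quadratic_cdm_interior_stationarity (k : ℕ) (pts : Fin k → ℝ)
    (hmono : Monotone pts)
    (hrange : ∀ j, pts j ∈ Set.Icc (0 : ℝ) 1)
    (i iprev inext : Fin k)
    (hprev : (iprev : ℕ) + 1 = (i : ℕ)) (hnext : (i : ℕ) + 1 = (inext : ℕ))
    (hlt₁ : pts iprev < pts i) (hlt₂ : pts i < pts inext)
    -- pts i is optimal: it (locally) minimizes the reconstruction error as a
    -- function of the i-th quantization point, the others being fixed
    (hopt : IsLocalMin
      (fun t => ∫ x in (0:ℝ)..1,
        ⨅ j, |x ^ 2 - (Function.update pts i t j) ^ 2|) (pts i)) :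
    pts i ^ 2 =
      (1 / 4) * (pts iprev ^ 2 + pts inext ^ 2) +
      (1 / (4 * Real.sqrt 2)) *
        Real.sqrt (pts iprev ^ 4 + 6 * pts iprev ^ 2 * pts inext ^ 2 +
          pts inext ^ 4) := by
  haveI : Nonempty (Fin k) := ⟨i⟩
  set a := pts iprev with ha_def
  set b := pts inext with hb_def
  set m := pts i with hm_def
  have hne_prev : iprev ≠ i := by intro h; rw [h] at hprev; omega
  have hne_next : inext ≠ i := by intro h; rw [h] at hnext; omega
  have ha0 : 0 ≤ a := (hrange iprev).1
  have hb1 : b ≤ 1 := (hrange inext).2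
  have hm0 : 0 < m := lt_of_le_of_lt ha0 hlt₁
  have hb0 : 0 < b := lt_trans hm0 hlt₂
  -- the family and its basic properties
  set G : ℝ → ℝ → ℝ := fun t x => ⨅ j, |x ^ 2 - (Function.update pts i t j) ^ 2|
    with hG_def
  have hbdd : ∀ t x, BddBelow (Set.range fun j => |x ^ 2 - (Function.update pts i t j) ^ 2|) := by
    intro t x
    refine ⟨0, ?_⟩
    rintro y ⟨j, rfl⟩
    positivity
  have hGcont : ∀ t, Continuous (G t) := by
    intro t
    have : G t = fun x => Finset.univ.inf' ⟨i, Finset.mem_univ i⟩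
        (fun j => |x ^ 2 - (Function.update pts i t j) ^ 2|) := by
      funext x
      rw [hG_def]
      exact (Finset.inf'_univ_eq_ciInf _).symm
    rw [this]
    exact Continuous.finset_inf'_apply _ fun j _ =>
      ((continuous_pow 2).sub continuous_const).abs
  have hGii : ∀ t p q, IntervalIntegrable (G t) volume p q :=
    fun t p q => (hGcont t).intervalIntegrable p q
  -- pointwise identification outside (a, b)
  have houtside : ∀ t ∈ Set.Ioo a b, ∀ j₀, (pts j₀ ≤ a ∧ j₀ = iprev) ∨ (b ≤ pts j₀ ∧ j₀ = inext) →
      True := fun _ _ _ _ => trivial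
  -- left part: x ∈ [0, a]
  have hleft : ∀ t ∈ Set.Ioo a b, ∀ x ∈ Set.uIcc (0:ℝ) a, G t x = G m x := by
    intro t ht x hx
    rw [Set.uIcc_of_le ha0] at hx
    obtain ⟨hx0, hxa⟩ := hx
    have key : ∀ s : ℝ, a < s →
        |x ^ 2 - (Function.update pts i s iprev) ^ 2| ≤
        |x ^ 2 - (Function.update pts i s i) ^ 2| := by
      intro s hs
      rw [Function.update_of_ne hne_prev, Function.update_self]
      have hxa2 : x ^ 2 ≤ a ^ 2 := pow_le_pow_left₀ hx0 hxa 2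
      have has2 : a ^ 2 ≤ s ^ 2 := pow_le_pow_left₀ ha0 hs.le 2
      rw [abs_of_nonpos (by linarith), abs_of_nonpos (by linarith)]
      linarith
    have heq : ∀ j, j ≠ i → (fun j => |x ^ 2 - (Function.update pts i t j) ^ 2|) j
        = (fun j => |x ^ 2 - (Function.update pts i m j) ^ 2|) j := by
      intro j hj
      simp only [Function.update_of_ne hj]
    exact le_antisymm
      (iInf_le_iInf_ignore _ _ i iprev hne_prev (hbdd t x) heq (key m hlt₁))
      (iInf_le_iInf_ignore _ _ i iprev hne_prev (hbdd m x)
        (fun j hj => (heq j hj).symm) (key t ht.1))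
  -- right part: x ∈ [b, 1]
  have hright : ∀ t ∈ Set.Ioo a b, ∀ x ∈ Set.uIcc b 1, G t x = G m x := by
    intro t ht x hx
    rw [Set.uIcc_of_le hb1] at hx
    obtain ⟨hxb, hx1⟩ := hx
    have hx0 : 0 ≤ x := le_trans hb0.le hxb
    have key : ∀ s : ℝ, 0 ≤ s → s < b →
        |x ^ 2 - (Function.update pts i s inext) ^ 2| ≤
        |x ^ 2 - (Function.update pts i s i) ^ 2| := by
      intro s hs0 hs
      rw [Function.update_of_ne hne_next, Function.update_self]
      have hbx2 : b ^ 2 ≤ x ^ 2 := pow_le_pow_left₀ hb0.le hxb 2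
      have hsb2 : s ^ 2 ≤ b ^ 2 := pow_le_pow_left₀ hs0 hs.le 2
      rw [abs_of_nonneg (by linarith), abs_of_nonneg (by linarith)]
      linarith
    have heq : ∀ j, j ≠ i → (fun j => |x ^ 2 - (Function.update pts i t j) ^ 2|) j
        = (fun j => |x ^ 2 - (Function.update pts i m j) ^ 2|) j := by
      intro j hj
      simp only [Function.update_of_ne hj]
    exact le_antisymm
      (iInf_le_iInf_ignore _ _ i inext hne_next (hbdd t x) heq (key m hm0.le hlt₂))
      (iInf_le_iInf_ignore _ _ i inext hne_next (hbdd m x)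
        (fun j hj => (heq j hj).symm) (key t (le_trans ha0 ht.1.le) ht.2))
  -- middle part: x ∈ [a, b]
  have hmid : ∀ t ∈ Set.Ioo a b, ∀ x ∈ Set.uIcc a b,
      G t x = min (x^2 - a^2) (min |x^2 - t^2| (b^2 - x^2)) := by
    intro t ht x hx
    rw [Set.uIcc_of_le (le_trans ht.1.le ht.2.le)] at hx
    obtain ⟨hxa, hxb⟩ := hx
    have hx0 : 0 ≤ x := le_trans ha0 hxa
    have hxa2 : a ^ 2 ≤ x ^ 2 := pow_le_pow_left₀ ha0 hxa 2
    have hxb2 : x ^ 2 ≤ b ^ 2 := pow_le_pow_left₀ hx0 hxb 2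
    apply le_antisymm
    · refine le_min ?_ (le_min ?_ ?_)
      · have := ciInf_le (hbdd t x) iprev
        rwa [Function.update_of_ne hne_prev, ← ha_def,
          abs_of_nonneg (by linarith)] at this
      · have := ciInf_le (hbdd t x) i
        rwa [Function.update_self] at this
      · have := ciInf_le (hbdd t x) inext
        rwa [Function.update_of_ne hne_next, ← hb_def,
          abs_of_nonpos (by linarith), neg_sub] at this
    · refine le_ciInf fun j => ?_
      by_cases hj : j = i
      · subst hj
        rw [Function.update_self]
        exact le_trans (min_le_right _ _) (min_le_left _ _)
      · rw [Function.update_of_ne hj]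
        have hjv : (j : ℕ) ≠ (i : ℕ) := fun h => hj (Fin.ext h)
        rcases lt_or_gt_of_ne hjv with h | h
        · have hji : j ≤ iprev := by rw [Fin.le_def]; omega
          have hpj : pts j ≤ a := hmono hji
          have hpj0 : 0 ≤ pts j := (hrange j).1
          have : pts j ^ 2 ≤ a ^ 2 := pow_le_pow_left₀ hpj0 hpj 2
          calc min (x^2 - a^2) (min |x^2 - t^2| (b^2 - x^2)) ≤ x^2 - a^2 := min_le_left _ _
          _ ≤ x ^ 2 - pts j ^ 2 := by linarith
          _ ≤ |x ^ 2 - pts j ^ 2| := le_abs_self _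
        · have hji : inext ≤ j := by rw [Fin.le_def]; omega
          have hpj : b ≤ pts j := hmono hji
          have : b ^ 2 ≤ pts j ^ 2 := pow_le_pow_left₀ hb0.le hpj 2
          calc min (x^2 - a^2) (min |x^2 - t^2| (b^2 - x^2))
              ≤ b^2 - x^2 := le_trans (min_le_right _ _) (min_le_right _ _)
          _ ≤ pts j ^ 2 - x ^ 2 := by linarith
          _ ≤ |x ^ 2 - pts j ^ 2| := by rw [abs_sub_comm]; exact le_abs_self _
  -- the explicit local form of the objective
  set C : ℝ := (∫ x in (0:ℝ)..a, G m x) + (∫ x in b..(1:ℝ), G m x) with hC_def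
  have hEeq : ∀ t ∈ Set.Ioo a b,
      (∫ x in (0:ℝ)..1, G t x)
        = (4/3)*t^3 - (4/3)*(((a^2+t^2)/2) * Real.sqrt ((a^2+t^2)/2))
          - (4/3)*(((b^2+t^2)/2) * Real.sqrt ((b^2+t^2)/2))
          + ((2/3)*(a^3+b^3) + C) := by
    intro t ht
    have hsplit : (∫ x in (0:ℝ)..1, G t x)
        = (∫ x in (0:ℝ)..a, G t x) + (∫ x in a..b, G t x) + (∫ x in b..(1:ℝ), G t x) := by
      rw [integral_add_adjacent_intervals (hGii t 0 a) (hGii t a b),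
        integral_add_adjacent_intervals (hGii t 0 b) (hGii t b 1)]
    rw [hsplit, integral_congr (hleft t ht), integral_congr (hright t ht),
      integral_congr (hmid t ht), quant_integral a b t ha0 ht.1 ht.2]
    have hcomm : ((t^2+b^2):ℝ) = b^2 + t^2 := add_comm _ _
    have hcomm2 : ((a^2+t^2):ℝ) = a^2 + t^2 := rfl
    rw [hcomm]
    ring
  -- local min of the explicit function
  have hnb : Set.Ioo a b ∈ nhds m := Ioo_mem_nhds hlt₁ hlt₂
  have hopt' : IsLocalMin (fun t => (4/3)*t^3
      - (4/3)*(((a^2+t^2)/2) * Real.sqrt ((a^2+t^2)/2))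
      - (4/3)*(((b^2+t^2)/2) * Real.sqrt ((b^2+t^2)/2))
      + ((2/3)*(a^3+b^3) + C)) m := by
    refine hopt.congr (Filter.eventuallyEq_of_mem hnb ?_)
    intro t ht
    exact hEeq t ht
  -- derivative
  have h1 : HasDerivAt (fun t : ℝ => t^3) (3*m^2) m := by
    simpa using hasDerivAt_pow 3 m
  have h2 := quant_deriv (a^2) m (sq_nonneg a) hm0
  have h3 := quant_deriv (b^2) m (sq_nonneg b) hm0
  have hderiv : HasDerivAt (fun t => (4/3)*t^3
      - (4/3)*(((a^2+t^2)/2) * Real.sqrt ((a^2+t^2)/2))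
      - (4/3)*(((b^2+t^2)/2) * Real.sqrt ((b^2+t^2)/2))
      + ((2/3)*(a^3+b^3) + C))
      ((4/3)*(3*m^2) - (4/3)*((3/2) * m * Real.sqrt ((a^2+m^2)/2))
        - (4/3)*((3/2) * m * Real.sqrt ((b^2+m^2)/2))) m :=
    (((h1.const_mul (4/3)).sub (h2.const_mul (4/3))).sub
      (h3.const_mul (4/3))).add_const _
  have hzero := hopt'.hasDerivAt_eq_zero hderiv
  have hstat : 2*m = Real.sqrt ((a^2+m^2)/2) + Real.sqrt ((m^2+b^2)/2) := by
    have hcomm : ((b^2+m^2):ℝ)/2 = (m^2+b^2)/2 := by ring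
    rw [hcomm] at hzero
    have h2m : (2*m) * (2*m) = (2*m) * (Real.sqrt ((a^2+m^2)/2)
        + Real.sqrt ((m^2+b^2)/2)) := by linear_combination hzero
    exact mul_left_cancel₀ (by positivity) h2m
  exact quant_alg a b m hstat
end

section
/- If the CDM of an environment of measurable functions F on ℝⁿ with σ(y,y') = (y-y')² satisfies ρ(x,x') = K‖x - x'‖² for some constant K > 0 and all x, x' ∈ ℝⁿ, then for Q-almost every f ∈ F, f is an affine function on ℝⁿ (assuming each f is continuous). -/
set_option maxHeartbeats 1000000

open MeasureTheory

private lemma midpoint_ae {Ω : Type*} [MeasurableSpace Ω]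
    {n : ℕ} (Q : Measure Ω) [IsProbabilityMeasure Q]
    (g : Ω → EuclideanSpace ℝ (Fin n) → ℝ)
    (hint : ∀ x x', Integrable (fun ω => (g ω x - g ω x') ^ 2) Q)
    (K : ℝ)
    (hρ : ∀ x x', ∫ ω, (g ω x - g ω x') ^ 2 ∂Q = K * ‖x - x'‖ ^ 2)
    (x y : EuclideanSpace ℝ (Fin n)) :
    ∀ᵐ ω ∂Q, g ω (midpoint ℝ x y) = midpoint ℝ (g ω x) (g ω y) := by
  set m := midpoint ℝ x y with hm
  have hxm : ‖x - m‖ ^ 2 = ‖x - y‖ ^ 2 / 4 := by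
    have : x - m = (2⁻¹ : ℝ) • (x - y) := by
      rw [hm, midpoint_eq_smul_add, invOf_eq_inv]
      module
    rw [this, norm_smul]
    simp [norm_inv]
    ring
  have hmy : ‖m - y‖ ^ 2 = ‖x - y‖ ^ 2 / 4 := by
    have : m - y = (2⁻¹ : ℝ) • (x - y) := by
      rw [hm, midpoint_eq_smul_add, invOf_eq_inv]
      module
    rw [this, norm_smul]
    simp [norm_inv]
    ring
  have hkey : ∫ ω, (g ω x + g ω y - 2 * g ω m) ^ 2 ∂Q = 0 := by
    have hpt : ∀ ω, (g ω x + g ω y - 2 * g ω m) ^ 2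
        = 2 * (g ω x - g ω m) ^ 2 + 2 * (g ω m - g ω y) ^ 2 - (g ω x - g ω y) ^ 2 := by
      intro ω; ring
    have hI1 := hint x m
    have hI2 := hint m y
    have hI3 := hint x y
    calc ∫ ω, (g ω x + g ω y - 2 * g ω m) ^ 2 ∂Q
        = ∫ ω, (2 * (g ω x - g ω m) ^ 2 + 2 * (g ω m - g ω y) ^ 2 - (g ω x - g ω y) ^ 2) ∂Q := by
          simp_rw [hpt]
      _ = (∫ ω, 2 * (g ω x - g ω m) ^ 2 ∂Q) + (∫ ω, 2 * (g ω m - g ω y) ^ 2 ∂Q)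
            - ∫ ω, (g ω x - g ω y) ^ 2 ∂Q := by
          rw [integral_sub (by exact (hI1.const_mul 2).add (hI2.const_mul 2)) hI3,
            integral_add (hI1.const_mul 2) (hI2.const_mul 2)]
      _ = 2 * (K * ‖x - m‖ ^ 2) + 2 * (K * ‖m - y‖ ^ 2) - K * ‖x - y‖ ^ 2 := by
          rw [integral_const_mul, integral_const_mul, hρ, hρ, hρ]
      _ = 0 := by rw [hxm, hmy]; ring
  have hint' : Integrable (fun ω => (g ω x + g ω y - 2 * g ω m) ^ 2) Q := by
    have hpt : (fun ω => (g ω x + g ω y - 2 * g ω m) ^ 2)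
        = fun ω => 2 * (g ω x - g ω m) ^ 2 + 2 * (g ω m - g ω y) ^ 2 - (g ω x - g ω y) ^ 2 := by
      funext ω; ring
    rw [hpt]
    exact (((hint x m).const_mul 2).add ((hint m y).const_mul 2)).sub (hint x y)
  have hz : ∀ᵐ ω ∂Q, (g ω x + g ω y - 2 * g ω m) ^ 2 = 0 := by
    have := (integral_eq_zero_iff_of_nonneg (fun ω => sq_nonneg _) hint').1 hkey
    filter_upwards [this] with ω hω using hω
  filter_upwards [hz] with ω hω
  have h0 : g ω x + g ω y - 2 * g ω m = 0 := by
    have hω' : (g ω x + g ω y - 2 * g ω m) ^ 2 = 0 := hω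
    exact pow_eq_zero_iff (n := 2) (by norm_num) |>.1 hω'
  have : g ω m = (g ω x + g ω y) / 2 := by linarith
  rw [this, midpoint_eq_smul_add]
  simp
  ring

/-- If the CDM of an environment of continuous functions on ℝⁿ with
σ(y,y') = (y-y')² equals K‖x - x'‖² for some K > 0, then Q-almost every
function in the environment is affine. -/
theorem cdm_euclidean_implies_affine {Ω : Type*} [MeasurableSpace Ω]
    (n : ℕ) (Q : Measure Ω) [IsProbabilityMeasure Q]
    (g : Ω → EuclideanSpace ℝ (Fin n) → ℝ)
    (hcont : ∀ ω, Continuous (g ω))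
    (hint : ∀ x x', Integrable (fun ω => (g ω x - g ω x') ^ 2) Q)
    (K : ℝ) (hK : 0 < K)
    (hρ : ∀ x x', ∫ ω, (g ω x - g ω x') ^ 2 ∂Q = K * ‖x - x'‖ ^ 2) :
    ∀ᵐ ω ∂Q, ∃ (L : EuclideanSpace ℝ (Fin n) →ₗ[ℝ] ℝ) (c : ℝ),
      ∀ x, g ω x = L x + c := by
  obtain ⟨s, hsc, hsd⟩ := TopologicalSpace.exists_countable_dense (EuclideanSpace ℝ (Fin n))
  have hae : ∀ᵐ ω ∂Q, ∀ x ∈ s, ∀ y ∈ s,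
      g ω (midpoint ℝ x y) = midpoint ℝ (g ω x) (g ω y) := by
    rw [ae_ball_iff hsc]
    intro x hx
    rw [ae_ball_iff hsc]
    intro y hy
    exact midpoint_ae Q g hint K hρ x y
  filter_upwards [hae] with ω hω
  -- extend to all x y by continuity
  have hall : ∀ x y, g ω (midpoint ℝ x y) = midpoint ℝ (g ω x) (g ω y) := by
    have hclosed : IsClosed {p : EuclideanSpace ℝ (Fin n) × EuclideanSpace ℝ (Fin n) |
        g ω (midpoint ℝ p.1 p.2) = midpoint ℝ (g ω p.1) (g ω p.2)} := by
      have hmc : Continuous fun p : EuclideanSpace ℝ (Fin n) × EuclideanSpace ℝ (Fin n) =>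
          midpoint ℝ p.1 p.2 := by
        simp only [midpoint_eq_smul_add]
        fun_prop
      have hmc' : Continuous fun p : ℝ × ℝ => midpoint ℝ p.1 p.2 := by
        simp only [midpoint_eq_smul_add]
        fun_prop
      apply isClosed_eq
      · exact (hcont ω).comp hmc
      · exact hmc'.comp (((hcont ω).comp continuous_fst).prodMk ((hcont ω).comp continuous_snd))
    have hsub : s ×ˢ s ⊆ {p : EuclideanSpace ℝ (Fin n) × EuclideanSpace ℝ (Fin n) |
        g ω (midpoint ℝ p.1 p.2) = midpoint ℝ (g ω p.1) (g ω p.2)} := by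
      rintro ⟨x, y⟩ ⟨hx, hy⟩
      exact hω x hx y hy
    have hdense : Dense (s ×ˢ s) := hsd.prod hsd
    have := hclosed.closure_subset_iff.2 hsub
    rw [hdense.closure_eq] at this
    intro x y
    have h2 := this (Set.mem_univ (x, y))
    simp only [Set.mem_setOf_eq] at h2
    exact h2
  set c := g ω 0 with hc
  have h0 : (fun x => g ω x - c) 0 = 0 := by simp [hc]
  have hmid : ∀ x y, (fun x => g ω x - c) (midpoint ℝ x y)
      = midpoint ℝ ((fun x => g ω x - c) x) ((fun x => g ω x - c) y) := by
    intro x y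
    simp only
    rw [hall x y, midpoint_eq_smul_add, midpoint_eq_smul_add]
    simp
    ring
  have hcont' : Continuous (fun x => g ω x - c) := (hcont ω).sub continuous_const
  refine ⟨((AddMonoidHom.ofMapMidpoint ℝ ℝ (fun x => g ω x - c) h0 hmid).toRealLinearMap
    hcont').toLinearMap, c, fun x => ?_⟩
  have : (((AddMonoidHom.ofMapMidpoint ℝ ℝ (fun x => g ω x - c) h0 hmid).toRealLinearMap
      hcont').toLinearMap : EuclideanSpace ℝ (Fin n) → ℝ) x = g ω x - c := by
    simp [AddMonoidHom.coe_toRealLinearMap, AddMonoidHom.coe_ofMapMidpoint]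
    rfl
  rw [this]; ring
end
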